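/- Trail unwinding commutes with heap extension: if unwinding the trail segment t on store S yields S', then unwinding t on the store extended with a fresh free-variable cell at ℓ yields S' extended with the same free-variable cell at ℓ; consequently, allocating a fresh free variable preserves well-typedness of the trail. -/

import Mathlib

/-- Heap values: structures, free variables (annotated with an atomic type),
pointers, tuples, and closures. Locations are natural numbers. -/
inductive HVal where
  | str : ℕ → List ℕ → HVal      -- constructor applied to argument locations
  | free : ℕ → HVal              -- free variable annotated with its atomic type
  | bound : ℕ → HVal             -- pointer to another location
  | tuple : List ℕ → HVal        -- tuple of word values (locations)
  | close : ℕ → ℕ → HVal         -- closure: environment location and code label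

/-- The component locations a heap value refers to. -/
def HVal.components : HVal → List ℕ
  | .str _ ls => ls
  | .free _ => []
  | .bound l => [l]
  | .tuple ls => ls
  | .close w _ => [w]

/-- A heap maps locations to heap values (partially). -/
abbrev Heap := ℕ → Option HVal

/-- Heap update/extension `H[ℓ ↦ v]`. -/
def Heap.update (H : Heap) (l : ℕ) (v : HVal) : Heap :=
  fun l' => if l' = l then some v else H l'

/-- The heap occurs relation `ℓ₁ ∈_H ℓ₂`: `ℓ₁` occurs in the value rooted at `ℓ₂`
(by reflexivity, by following `bound` pointers, or through a component of a
structure, tuple, or closure). -/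
inductive HOccurs (H : Heap) : ℕ → ℕ → Prop where
  | refl : ∀ {l}, HOccurs H l l
  | step : ∀ {l₁ l₂ v l'}, H l₂ = some v → l' ∈ v.components →
      HOccurs H l₁ l' → HOccurs H l₁ l₂

/-- The heap non-occurs relation `ℓ₁ ∉_H ℓ₂`, dual to `HOccurs`:
`ℓ₂` is a cell distinct from `ℓ₁` none of whose components contains `ℓ₁`. -/
inductive NHOccurs (H : Heap) : ℕ → ℕ → Prop where
  | free : ∀ {l₁ l₂ a}, l₁ ≠ l₂ → H l₂ = some (.free a) → NHOccurs H l₁ l₂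
  | step : ∀ {l₁ l₂ v}, l₁ ≠ l₂ → H l₂ = some v →
      (∀ l' ∈ v.components, NHOccurs H l₁ l') → NHOccurs H l₁ l₂

/-- Types of heap cells: Prolog-term (atomic) types, tuple types, and
continuation (closure) types. -/
inductive Ty where
  | atom : ℕ → Ty
  | tup : List Ty → Ty
  | cont : Ty

/-- A signature assigns to each constructor its argument atomic types and its
result atomic type. -/
abbrev Sig := ℕ → Option (List ℕ × ℕ)

/-- A heap typing derivation is an ordered list of typed locations,
newest first; the heap type `Ψ` it induces looks a location up. -/
abbrev Deriv := List (ℕ × Ty)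

/-- The (unordered) heap type `Ψ` induced by a derivation. -/
def psiOf (D : Deriv) : ℕ → Option Ty :=
  fun l => (D.find? (fun p => p.1 = l)).map Prod.snd

/-- Heap value typing `Ψ ⊢ v : τ` relative to a signature. -/
inductive VTy (Sg : Sig) (Ψ : ℕ → Option Ty) : HVal → Ty → Prop where
  | free : ∀ {a}, VTy Sg Ψ (.free a) (.atom a)
  | bound : ∀ {l a}, Ψ l = some (.atom a) → VTy Sg Ψ (.bound l) (.atom a)
  | str : ∀ {c ls as a}, Sg c = some (as, a) →
      List.Forall₂ (fun l b => Ψ l = some (.atom b)) ls as →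
      VTy Sg Ψ (.str c ls) (.atom a)
  | tuple : ∀ {ls τs}, List.Forall₂ (fun l τ => Ψ l = some τ) ls τs →
      VTy Sg Ψ (.tuple ls) (.tup τs)
  | close : ∀ {w lc τ}, Ψ w = some τ → VTy Sg Ψ (.close w lc) .cont

/-- Heap typing derivations `H : Ψ`: locations are typed one at a time and each
value may only refer to previously typed locations, so a derivation is a
topological ordering witnessing acyclicity of the heap. -/
inductive HeapTy (Sg : Sig) (H : Heap) : Deriv → Prop where
  | nil : HeapTy Sg H []
  | cons : ∀ {D l v τ}, HeapTy Sg H D → H l = some v → VTy Sg (psiOf D) v τ →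
      psiOf D l = none → HeapTy Sg H ((l, τ) :: D)

/-- Locations typed strictly before `l` in the derivation `D`
(derivations are newest-first, so predecessors appear after `l` in the list). -/
def predD (D : Deriv) (l : ℕ) : List ℕ :=
  ((D.dropWhile (fun p => p.1 ≠ l)).tail).map Prod.fst

/-- Locations typed strictly after `l` in the derivation `D`. -/
def succD (D : Deriv) (l : ℕ) : List ℕ :=
  (D.takeWhile (fun p => p.1 ≠ l)).map Prod.fst

/-- `end(H, ℓ)` follows `bound`-pointer chains: `EndsAt H ℓ ℓ'` says the chain
starting at `ℓ` terminates at `ℓ'`, which holds a free variable or structure. -/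
inductive EndsAt (H : Heap) : ℕ → ℕ → Prop where
  | free : ∀ {l a}, H l = some (.free a) → EndsAt H l l
  | str : ∀ {l c ls}, H l = some (.str c ls) → EndsAt H l l
  | bound : ∀ {l l' l''}, H l = some (.bound l') → EndsAt H l' l'' → EndsAt H l l''

/-- A trail segment: a list of locations annotated with atomic types. -/
abbrev Seg := List (ℕ × ℕ)

/-- Unwinding a trail segment resets each recorded location to a free variable
of the recorded type. -/
def unwind (S : Heap) : Seg → Heap
  | [] => S
  | (l, a) :: t => unwind (S.update l (.free a)) t

/-- A trail frame: a segment, an environment location, and a failure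
continuation label. -/
abbrev Frame := Seg × ℕ × ℕ

/-- Trail well-typedness `S ⊢ T ok`: for each frame, unwinding its segment
yields a well-typed store in which the frame's environment is well-typed, and
the remaining trail is ok in the unwound store. -/
inductive TrailOk (Sg : Sig) : Heap → List Frame → Prop where
  | nil : ∀ {S}, TrailOk Sg S []
  | cons : ∀ {S : Heap} {t : Seg} {w lc : ℕ} {T : List Frame},
      (∃ D, HeapTy Sg (unwind S t) D ∧ (psiOf D w).isSome) →
      TrailOk Sg (unwind S t) T →
      TrailOk Sg S ((t, w, lc) :: T)

section Aux

lemma unwind_isSome {t : Seg} {S : Heap} {x : ℕ} (h : (S x).isSome) :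
    ((unwind S t) x).isSome := by
  induction t generalizing S with
  | nil => exact h
  | cons p t ih =>
    apply ih
    simp only [Heap.update]
    split <;> simp [h]

lemma unwind_apply_of_ne {t : Seg} {S : Heap} {x : ℕ}
    (h : ∀ p ∈ t, p.1 ≠ x) : (unwind S t) x = S x := by
  induction t generalizing S with
  | nil => rfl
  | cons p t ih =>
    rw [unwind, ih (fun q hq => h q (List.mem_cons_of_mem _ hq))]
    simp only [Heap.update]
    rw [if_neg (fun hx => h p List.mem_cons_self hx.symm)]

lemma unwind_update_comm {t : Seg} {S : Heap} {l a : ℕ}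
    (h : ∀ p ∈ t, p.1 ≠ l) :
    unwind (S.update l (.free a)) t = (unwind S t).update l (.free a) := by
  induction t generalizing S with
  | nil => rfl
  | cons p t ih =>
    rw [unwind, unwind]
    have hpl : p.1 ≠ l := h p List.mem_cons_self
    have : (S.update l (.free a)).update p.1 (.free p.2)
        = (S.update p.1 (.free p.2)).update l (.free a) := by
      funext x
      simp only [Heap.update]
      by_cases h1 : x = p.1 <;> by_cases h2 : x = l <;>
        simp_all [Heap.update]
    rw [this, ih (fun q hq => h q (List.mem_cons_of_mem _ hq))]

lemma heapTy_update_fresh {Sg : Sig} {H : Heap} {D : Deriv} {l : ℕ} {v : HVal}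
    (hD : HeapTy Sg H D) (hl : H l = none) :
    HeapTy Sg (H.update l v) D := by
  induction hD with
  | nil => exact .nil
  | cons hD hlv hv hnone ih =>
    refine .cons ih ?_ hv hnone
    simp only [Heap.update]
    rename_i l' _ _
    rw [if_neg (fun h : l' = l => by rw [h, hl] at hlv; cases hlv)]
    exact hlv

end Aux

lemma trailOk_update_fresh {Sg : Sig} {l a : ℕ} {S : Heap} {T : List Frame}
    (hok : TrailOk Sg S T) (hfresh : S l = none)
    (hT : ∀ fr ∈ T, ∀ p ∈ fr.1, (S p.1).isSome) :
    TrailOk Sg (S.update l (.free a)) T := by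
  induction hok with
  | nil => exact .nil
  | @cons S' t w lc T' hD hok ih =>
    have hne : ∀ p ∈ t, p.1 ≠ l := by
      intro p hp hpl
      have := hT _ List.mem_cons_self p hp
      simp [hpl, hfresh] at this
    have hcomm := unwind_update_comm (S := S') (a := a) hne
    have hul : (unwind S' t) l = none := by rw [unwind_apply_of_ne hne]; exact hfresh
    refine .cons ?_ ?_
    · obtain ⟨D, hDty, hw⟩ := hD
      rw [hcomm]
      exact ⟨D, heapTy_update_fresh hDty hul, hw⟩
    · rw [hcomm]
      exact ih hul (fun fr hfr p hp =>
        unwind_isSome (hT fr (List.mem_cons_of_mem _ hfr) p hp))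

/-- Trail unwinding commutes with heap extension at a fresh
location, and consequently allocating a fresh free variable preserves trail
well-typedness. -/
theorem unwind_extend_fresh {S : Heap} {l a : ℕ} (hfresh : S l = none) :
    (∀ t : Seg, (∀ p ∈ t, (S p.1).isSome) →
      unwind (S.update l (.free a)) t = (unwind S t).update l (.free a)) ∧
    (∀ (Sg : Sig) (T : List Frame), (∀ fr ∈ T, ∀ p ∈ fr.1, (S p.1).isSome) →
      TrailOk Sg S T → TrailOk Sg (S.update l (.free a)) T) := by
  have key : ∀ t : Seg, (∀ p ∈ t, (S p.1).isSome) →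
      unwind (S.update l (.free a)) t = (unwind S t).update l (.free a) := by
    intro t ht
    apply unwind_update_comm
    intro p hp hpl
    have := ht p hp
    simp [hpl, hfresh] at this
  exact ⟨key, fun Sg T hT hok => trailOk_update_fresh hok hfresh hT⟩
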